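/- Let G be a finite connected graph, ℓ ∈ {0,...,|V(G)|}, and α > 0. Let Q^(ℓ) be the generator of the symmetric exclusion process on configurations with exactly ℓ black marbles, i.e. (-Q^(ℓ)f)(x) = α · Σ_{e ∈ E(G)} (f(x) - f(x_e)), where x_e is x with the marbles at the endpoints of e swapped. If ψ is an eigenvector of -Q^(ℓ) with eigenvalue λ, then the function ψ_+ defined on configurations x with ℓ-1 black marbles by ψ_+(x) = Σ_{v : x(v)=0} ψ(x_v) (where x_v adds a black marble at v) satisfies -Q^(ℓ-1) ψ_+ = λ ψ_+. In particular ψ_+ is either identically zero or an eigenvector of -Q^(ℓ-1) with eigenvalue λ. -/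

import Mathlib

open Finset

/-- Swap the values of a configuration at two vertices. -/
def swapAt {V : Type*} [DecidableEq V] (x : V → Bool) (u v : V) : V → Bool :=
  fun w => if w = u then x v else if w = v then x u else x w

/-- Number of black marbles (`true` coordinates) of a configuration. -/
def countB {V : Type*} [Fintype V] (x : V → Bool) : ℕ :=
  (Finset.univ.filter fun v => x v = true).card

/-- The negative generator `-Q` of the symmetric exclusion process on `G` with rate `α`:
`(-Qf)(x) = α Σ_{e ∈ E(G)} (f x - f x_e)`, written as half the sum over ordered adjacent pairs. -/
noncomputable def negGen {V : Type*} [Fintype V] [DecidableEq V] (G : SimpleGraph V) [DecidableRel G.Adj]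
    (α : ℝ) (f : (V → Bool) → ℝ) (x : V → Bool) : ℝ :=
  (α / 2) * ∑ u : V, ∑ v : V, if G.Adj u v then f x - f (swapAt x u v) else 0

/-- `ψ_+(x) = Σ_{v : x(v)=0} ψ(x_v)`, adding a black marble at `v`. -/
def plusOp {V : Type*} [Fintype V] [DecidableEq V] (ψ : (V → Bool) → ℝ) (x : V → Bool) : ℝ :=
  ∑ v ∈ Finset.univ.filter (fun v => x v = false), ψ (Function.update x v true)

/-- `ψ_-(x) = Σ_{v : x(v)=1} ψ(x_v)`, removing the black marble at `v`. -/
def minusOp {V : Type*} [Fintype V] [DecidableEq V] (ψ : (V → Bool) → ℝ) (x : V → Bool) : ℝ :=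
  ∑ v ∈ Finset.univ.filter (fun v => x v = true), ψ (Function.update x v false)

/-- Inner product at level `ℓ` with respect to the uniform measure on `ℓ`-subsets. -/
noncomputable def innerL {V : Type*} [Fintype V] [DecidableEq V] (ℓ : ℕ) (f g : (V → Bool) → ℝ) : ℝ :=
  (((Fintype.card V).choose ℓ : ℝ))⁻¹ *
    ∑ x ∈ Finset.univ.filter (fun x : V → Bool => countB x = ℓ), f x * g x

/-- Inner product on the full configuration space with respect to the uniform measure. -/
noncomputable def innerF {V : Type*} [Fintype V] [DecidableEq V] (f g : (V → Bool) → ℝ) : ℝ :=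
  ((2 : ℝ) ^ (Fintype.card V))⁻¹ * ∑ x : V → Bool, f x * g x

lemma swapAt_comp {V : Type*} [DecidableEq V] (x : V → Bool) (u v : V) :
    swapAt x u v = x ∘ Equiv.swap u v := by
  funext w
  unfold swapAt
  by_cases h1 : w = u <;> by_cases h2 : w = v <;>
    simp [h1, h2, Function.comp, Equiv.swap_apply_def]
  intro h
  rw [h]

lemma update_swapAt {V : Type*} [DecidableEq V] (x : V → Bool) (u v w : V) :
    Function.update (swapAt x u v) (Equiv.swap u v w) true
      = swapAt (Function.update x w true) u v := by
  rw [swapAt_comp, swapAt_comp]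
  have h := Function.update_comp_equiv x (Equiv.swap u v) w true
  simp only [Equiv.symm_swap] at h
  exact h.symm

lemma plusOp_swapAt {V : Type*} [Fintype V] [DecidableEq V]
    (ψ : (V → Bool) → ℝ) (x : V → Bool) (u v : V) :
    plusOp ψ (swapAt x u v)
      = ∑ w ∈ Finset.univ.filter (fun w => x w = false),
          ψ (swapAt (Function.update x w true) u v) := by
  unfold plusOp
  refine (Finset.sum_equiv (Equiv.swap u v) ?_ ?_).symm
  · intro w
    simp only [Finset.mem_filter, Finset.mem_univ, true_and, swapAt_comp,
      Function.comp, Equiv.swap_apply_self]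
  · intro w hw
    rw [← update_swapAt]

lemma negGen_plusOp {V : Type*} [Fintype V] [DecidableEq V] (G : SimpleGraph V)
    [DecidableRel G.Adj] (α : ℝ) (ψ : (V → Bool) → ℝ) (x : V → Bool) :
    negGen G α (plusOp ψ) x
      = ∑ w ∈ Finset.univ.filter (fun w => x w = false),
          negGen G α ψ (Function.update x w true) := by
  unfold negGen
  have step : ∀ u v : V, (if G.Adj u v then plusOp ψ x - plusOp ψ (swapAt x u v) else 0)
      = ∑ w ∈ Finset.univ.filter (fun w => x w = false),
          (if G.Adj u v then ψ (Function.update x w true)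
            - ψ (swapAt (Function.update x w true) u v) else 0) := by
    intro u v
    split
    · rw [plusOp_swapAt, show plusOp ψ x = ∑ w ∈ Finset.univ.filter (fun w => x w = false),
          ψ (Function.update x w true) from rfl, ← Finset.sum_sub_distrib]
    · simp
  simp_rw [step]
  have h1 : ∀ u : V, (∑ v : V, ∑ w ∈ Finset.univ.filter (fun w => x w = false),
        (if G.Adj u v then ψ (Function.update x w true)
          - ψ (swapAt (Function.update x w true) u v) else 0))
      = ∑ w ∈ Finset.univ.filter (fun w => x w = false), ∑ v : V,
        (if G.Adj u v then ψ (Function.update x w true)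
          - ψ (swapAt (Function.update x w true) u v) else 0) := fun u => Finset.sum_comm
  simp_rw [h1]
  rw [Finset.sum_comm, Finset.mul_sum]

lemma countB_update {V : Type*} [Fintype V] [DecidableEq V] (x : V → Bool) (w : V)
    (hw : x w = false) : countB (Function.update x w true) = countB x + 1 := by
  unfold countB
  have h : Finset.univ.filter (fun v => Function.update x w true v = true)
      = insert w (Finset.univ.filter (fun v => x v = true)) := by
    ext v
    by_cases hv : v = w <;> simp [Function.update_apply, hv]
  rw [h, Finset.card_insert_of_notMem (by simp [hw])]

lemma negGen_of_countB_zero {V : Type*} [Fintype V] [DecidableEq V] (G : SimpleGraph V)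
    [DecidableRel G.Adj] (α : ℝ) (f : (V → Bool) → ℝ) (x : V → Bool)
    (hx : countB x = 0) : negGen G α f x = 0 := by
  have hx' : ∀ v, x v = false := by
    intro v
    by_contra hv
    have : v ∈ Finset.univ.filter (fun v => x v = true) := by
      simp [Bool.not_eq_false] at hv; simp [hv]
    simp [countB, Finset.card_eq_zero] at hx
    simp only [Finset.mem_filter, hx] at this
    simp at this
  have hs : ∀ u v, swapAt x u v = x := by
    intro u v; funext w; simp [swapAt, hx']
  unfold negGen
  simp [hs]

/-- If ψ is an eigenvector of -Q^(ℓ) with eigenvalue λ, then ψ₊ satisfies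
-Q^(ℓ-1) ψ₊ = λ ψ₊ on configurations with ℓ-1 black marbles. -/
theorem plusOp_is_eigenvector {V : Type*} [Fintype V] [DecidableEq V]
    (G : SimpleGraph V) [DecidableRel G.Adj] (hG : G.Connected)
    (α : ℝ) (hα : 0 < α) (ℓ : ℕ) (hℓ : ℓ ≤ Fintype.card V)
    (ψ : (V → Bool) → ℝ) (lam : ℝ)
    (hψ : ∃ x, countB x = ℓ ∧ ψ x ≠ 0)
    (heig : ∀ x, countB x = ℓ → negGen G α ψ x = lam * ψ x) :
    ∀ x, countB x = ℓ - 1 → negGen G α (plusOp ψ) x = lam * plusOp ψ x := by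
  intro x hx
  rcases Nat.eq_zero_or_pos ℓ with h0 | hpos
  · subst h0
    obtain ⟨y, hy, hyne⟩ := hψ
    have hlam : lam = 0 := by
      have h := heig y hy
      rw [negGen_of_countB_zero G α ψ y hy] at h
      exact ((mul_eq_zero.mp h.symm).resolve_right hyne)
    rw [negGen_of_countB_zero G α _ x hx, hlam, zero_mul]
  · rw [negGen_plusOp,
      Finset.sum_congr rfl fun w hw => heig _ (by
        rw [countB_update x w (by simpa using hw), hx]; omega),
      plusOp, Finset.mul_sum]
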